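/- Let S be an n₁×n₂ real matrix such that every column of S has at most α·n₁ nonzero entries and every row has at most α·n₂ nonzero entries, where 0 ≤ α ≤ 1. Then the spectral norm of S satisfies ‖S‖ ≤ (α/2)·(n₁ + n₂)·‖S‖_∞, where ‖S‖_∞ = max_{i,j}|S_{ij}|. -/

import Mathlib

open Matrix BigOperators

/-- Frobenius norm of a real matrix. -/
noncomputable def frob {m n : Type*} [Fintype m] [Fintype n] (A : Matrix m n ℝ) : ℝ :=
  Real.sqrt (∑ i, ∑ j, (A i j) ^ 2)

/-- Spectral norm (largest singular value) of a real matrix. -/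
noncomputable def specNorm {m n : Type*} [Fintype m] [Fintype n] [DecidableEq n]
    (A : Matrix m n ℝ) : ℝ :=
  Real.sqrt (⨆ i, (Matrix.isHermitian_conjTranspose_mul_self A).eigenvalues i)

/-- Smallest singular value (√(λ_min(AᴴA)) convention). -/
noncomputable def sigmaMin {m n : Type*} [Fintype m] [Fintype n] [DecidableEq n]
    (A : Matrix m n ℝ) : ℝ :=
  Real.sqrt (⨅ i, (Matrix.isHermitian_conjTranspose_mul_self A).eigenvalues i)

/-- Maximum Euclidean row norm ‖·‖₂,∞. -/
noncomputable def rowTwoInf {m n : Type*} [Fintype m] [Fintype n] (A : Matrix m n ℝ) : ℝ :=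
  ⨆ i, Real.sqrt (∑ j, (A i j) ^ 2)

/-- Entrywise sup norm ‖·‖∞. -/
noncomputable def entryInf {m n : Type*} [Fintype m] [Fintype n] (A : Matrix m n ℝ) : ℝ :=
  ⨆ i, ⨆ j, |A i j|


theorem stmt_2 {n₁ n₂ : ℕ} (α : ℝ) (hα0 : 0 ≤ α) (hα1 : α ≤ 1)
    (S : Matrix (Fin n₁) (Fin n₂) ℝ)
    (hcol : ∀ j, (Nat.card {i : Fin n₁ // S i j ≠ 0} : ℝ) ≤ α * n₁)
    (hrow : ∀ i, (Nat.card {j : Fin n₂ // S i j ≠ 0} : ℝ) ≤ α * n₂) :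
    specNorm S ≤ α / 2 * (n₁ + n₂) * entryInf S := by
  classical
  set M := entryInf S with hMdef
  have hM0 : 0 ≤ M := Real.iSup_nonneg fun i => Real.iSup_nonneg fun j => abs_nonneg _
  have habs : ∀ i j, |S i j| ≤ M := by
    intro i j
    calc |S i j| ≤ ⨆ j, |S i j| :=
          le_ciSup (f := fun j => |S i j|) (Set.Finite.bddAbove (Set.finite_range _)) j
      _ ≤ M := le_ciSup (Set.Finite.bddAbove (Set.finite_range fun i => ⨆ j, |S i j|)) i
  have hrowsum : ∀ i, ∑ j, |S i j| ≤ α * n₂ * M := by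
    intro i
    have hcard : ((Finset.univ.filter (fun j => S i j ≠ 0)).card : ℝ) ≤ α * n₂ := by
      have := hrow i
      rwa [Nat.card_eq_fintype_card, Fintype.card_subtype] at this
    calc ∑ j, |S i j| = ∑ j ∈ Finset.univ.filter (fun j => S i j ≠ 0), |S i j| := by
          rw [Finset.sum_filter_of_ne]; intro j _ h; simpa using fun h0 => h (by simp [h0])
      _ ≤ ∑ _j ∈ Finset.univ.filter (fun j => S i j ≠ 0), M :=
          Finset.sum_le_sum fun j _ => habs i j
      _ = (Finset.univ.filter (fun j => S i j ≠ 0)).card * M := by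
          rw [Finset.sum_const, nsmul_eq_mul]
      _ ≤ α * n₂ * M := mul_le_mul_of_nonneg_right hcard hM0
  have hcolsum : ∀ j, ∑ i, |S i j| ≤ α * n₁ * M := by
    intro j
    have hcard : ((Finset.univ.filter (fun i => S i j ≠ 0)).card : ℝ) ≤ α * n₁ := by
      have := hcol j
      rwa [Nat.card_eq_fintype_card, Fintype.card_subtype] at this
    calc ∑ i, |S i j| = ∑ i ∈ Finset.univ.filter (fun i => S i j ≠ 0), |S i j| := by
          rw [Finset.sum_filter_of_ne]; intro i _ h; simpa using fun h0 => h (by simp [h0])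
      _ ≤ ∑ _i ∈ Finset.univ.filter (fun i => S i j ≠ 0), M :=
          Finset.sum_le_sum fun i _ => habs i j
      _ = (Finset.univ.filter (fun i => S i j ≠ 0)).card * M := by
          rw [Finset.sum_const, nsmul_eq_mul]
      _ ≤ α * n₁ * M := mul_le_mul_of_nonneg_right hcard hM0
  have hschur : ∀ v : Fin n₂ → ℝ,
      ∑ i, (∑ j, S i j * v j)^2 ≤ (α * n₂ * M) * (α * n₁ * M) * ∑ j, (v j)^2 := by
    intro v
    have step1 : ∀ i, (∑ j, S i j * v j)^2 ≤ (α * n₂ * M) * ∑ j, |S i j| * (v j)^2 := by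
      intro i
      have cs : (∑ j, Real.sqrt |S i j| * (Real.sqrt |S i j| * |v j|))^2 ≤
          (∑ j, (Real.sqrt |S i j|)^2) * ∑ j, (Real.sqrt |S i j| * |v j|)^2 :=
        Finset.sum_mul_sq_le_sq_mul_sq _ _ _
      have e1 : ∀ j, Real.sqrt |S i j| * (Real.sqrt |S i j| * |v j|) = |S i j * v j| := by
        intro j
        rw [← mul_assoc, Real.mul_self_sqrt (abs_nonneg _), abs_mul]
      have e2 : ∀ j, (Real.sqrt |S i j|)^2 = |S i j| := fun j => Real.sq_sqrt (abs_nonneg _)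
      have e3 : ∀ j, (Real.sqrt |S i j| * |v j|)^2 = |S i j| * (v j)^2 := by
        intro j; rw [mul_pow, Real.sq_sqrt (abs_nonneg _), sq_abs]
      simp only [e1, e2, e3] at cs
      calc (∑ j, S i j * v j)^2 ≤ (∑ j, |S i j * v j|)^2 := by
            rw [← sq_abs (∑ j, S i j * v j)]
            exact pow_le_pow_left₀ (abs_nonneg _) (Finset.abs_sum_le_sum_abs _ _) 2
        _ ≤ (∑ j, |S i j|) * ∑ j, |S i j| * (v j)^2 := cs
        _ ≤ (α * n₂ * M) * ∑ j, |S i j| * (v j)^2 := by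
            apply mul_le_mul_of_nonneg_right (hrowsum i)
            exact Finset.sum_nonneg fun j _ => mul_nonneg (abs_nonneg _) (sq_nonneg _)
    calc ∑ i, (∑ j, S i j * v j)^2 ≤ ∑ i, (α * n₂ * M) * ∑ j, |S i j| * (v j)^2 :=
          Finset.sum_le_sum fun i _ => step1 i
      _ = (α * n₂ * M) * ∑ j, (∑ i, |S i j|) * (v j)^2 := by
          rw [← Finset.mul_sum, Finset.sum_comm]
          congr 1; apply Finset.sum_congr rfl; intro j _; rw [Finset.sum_mul]
      _ ≤ (α * n₂ * M) * ∑ j, (α * n₁ * M) * (v j)^2 := by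
          apply mul_le_mul_of_nonneg_left _ (by positivity)
          exact Finset.sum_le_sum fun j _ => mul_le_mul_of_nonneg_right (hcolsum j) (sq_nonneg _)
      _ = (α * n₂ * M) * (α * n₁ * M) * ∑ j, (v j)^2 := by rw [← Finset.mul_sum]; ring
  set hA := Matrix.isHermitian_conjTranspose_mul_self S with hAdef
  have hRHS : (0:ℝ) ≤ α / 2 * (n₁ + n₂) * M := by positivity
  have hev : ∀ k, hA.eigenvalues k ≤ (α * n₂ * M) * (α * n₁ * M) := by
    intro k
    set v : Fin n₂ → ℝ := ⇑(hA.eigenvectorBasis k) with hv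
    have h1 : (Sᵀ * S) *ᵥ v = hA.eigenvalues k • v := hA.mulVec_eigenvectorBasis k
    have hnorm : ∑ j, (v j)^2 = 1 := by
      have hn : ‖hA.eigenvectorBasis k‖ = 1 := hA.eigenvectorBasis.orthonormal.1 k
      have := EuclideanSpace.norm_eq (hA.eigenvectorBasis k)
      rw [hn] at this
      have h2 := Real.sqrt_eq_one.mp this.symm
      simpa [hv, Real.norm_eq_abs, sq_abs] using h2
    have key : hA.eigenvalues k = ∑ i, ((S *ᵥ v) i)^2 := by
      have hd : v ⬝ᵥ ((Sᵀ * S) *ᵥ v) = hA.eigenvalues k * (v ⬝ᵥ v) := by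
        rw [h1, dotProduct_smul, smul_eq_mul]
      rw [← Matrix.mulVec_mulVec, Matrix.dotProduct_mulVec, Matrix.vecMul_transpose] at hd
      have hvv : v ⬝ᵥ v = 1 := by simpa [dotProduct, sq] using hnorm
      rw [hvv, mul_one] at hd
      rw [← hd]
      simp [dotProduct, sq]
    rw [key]
    have hm : ∀ i, (S *ᵥ v) i = ∑ j, S i j * v j := by
      intro i; simp [Matrix.mulVec, dotProduct]
    calc ∑ i, ((S *ᵥ v) i)^2 = ∑ i, (∑ j, S i j * v j)^2 := by simp_rw [hm]
      _ ≤ (α * n₂ * M) * (α * n₁ * M) * ∑ j, (v j)^2 := hschur v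
      _ = (α * n₂ * M) * (α * n₁ * M) := by rw [hnorm, mul_one]
  have hsup : (⨆ k, hA.eigenvalues k) ≤ (α / 2 * (n₁ + n₂) * M)^2 := by
    apply Real.iSup_le _ (sq_nonneg _)
    intro k
    refine (hev k).trans ?_
    nlinarith [sq_nonneg ((n₁:ℝ) - n₂), mul_nonneg (sq_nonneg (α*M)) (sq_nonneg ((n₁:ℝ) - n₂)),
      Nat.cast_nonneg (α := ℝ) n₁, Nat.cast_nonneg (α := ℝ) n₂]
  calc specNorm S ≤ Real.sqrt ((α / 2 * (n₁ + n₂) * M)^2) := Real.sqrt_le_sqrt hsup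
    _ = α / 2 * (n₁ + n₂) * M := Real.sqrt_sq hRHS
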